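/- Let n ≥ 1, let λ ∈ ℂ be nonzero, and fix L ∈ ℂ with exp(L) = λ. Let N denote the n×n matrix with 1 on the superdiagonal and 0 elsewhere, and let B := λ·I + N. Then the function φ(z) := Σ_{i=0}^{n−1} g_i(z)·exp((z−i)·L)·N^i is a C-flow of B, i.e. φ(z+w) = φ(z)·φ(w) for all z, w ∈ ℂ, φ(0) = I, and φ(1) = B. -/

import Mathlib

/-- `g l z = z(z-1)⋯(z-l+1)/l!`, with `g 0 z = 1`. -/
noncomputable def g (l : ℕ) (z : ℂ) : ℂ :=
  (∏ i ∈ Finset.range l, (z - i)) / (l.factorial : ℂ)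

lemma g_zero (z : ℂ) : g 0 z = 1 := by simp [g]

lemma g_rec (l : ℕ) (z : ℂ) : (z - l) * g l z = (l + 1 : ℂ) * g (l + 1) z := by
  have h1 : (l.factorial : ℂ) ≠ 0 := Nat.cast_ne_zero.2 l.factorial_ne_zero
  have h2 : ((l+1).factorial : ℂ) ≠ 0 := Nat.cast_ne_zero.2 (l+1).factorial_ne_zero
  rw [g, g, Finset.prod_range_succ]
  field_simp
  rw [Nat.factorial_succ]
  push_cast
  ring

lemma g_vand (k : ℕ) (z w : ℂ) :
    ∑ i ∈ Finset.range (k + 1), g i z * g (k - i) w = g k (z + w) := by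
  induction k with
  | zero => simp [g_zero]
  | succ k ih =>
    have key : ((k:ℂ) + 1) * ∑ i ∈ Finset.range (k + 2), g i z * g (k + 1 - i) w
        = (z + w - k) * ∑ i ∈ Finset.range (k + 1), g i z * g (k - i) w := by
      have expand : (z + w - k) * ∑ i ∈ Finset.range (k + 1), g i z * g (k - i) w
          = (∑ i ∈ Finset.range (k + 1), ((i:ℂ)+1) * g (i+1) z * g (k - i) w)
            + ∑ i ∈ Finset.range (k + 1), g i z * (((k - i : ℕ):ℂ)+1) * g (k - i + 1) w := by
        rw [Finset.mul_sum, ← Finset.sum_add_distrib]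
        refine Finset.sum_congr rfl fun i hi => ?_
        have hik : i ≤ k := Nat.lt_succ_iff.mp (Finset.mem_range.mp hi)
        have hz := g_rec i z
        have hw := g_rec (k - i) w
        have hcast : ((k - i : ℕ) : ℂ) = (k : ℂ) - i := by
          push_cast [hik]; ring
        calc (z + w - k) * (g i z * g (k - i) w)
            = ((z - i) * g i z) * g (k - i) w + g i z * ((w - ((k-i:ℕ):ℂ)) * g (k - i) w) := by
              rw [hcast]; ring
          _ = _ := by rw [hz, hw]; ring
      rw [expand]
      have s1 : (∑ a ∈ Finset.range (k + 2), ((a:ℕ):ℂ) * g a z * g (k + 1 - a) w)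
          = ∑ i ∈ Finset.range (k + 1), ((i:ℂ)+1) * g (i+1) z * g (k - i) w := by
        rw [Finset.sum_range_succ' (fun a => ((a:ℕ):ℂ) * g a z * g (k + 1 - a) w) (k+1)]
        simp only [Nat.cast_zero, zero_mul, add_zero]
        refine (Finset.sum_congr rfl fun i hi => ?_)
        have : k + 1 - (i + 1) = k - i := by omega
        rw [this]
        push_cast; ring
      have s2 : (∑ a ∈ Finset.range (k + 2), ((k:ℂ) + 1 - a) * (g a z * g (k + 1 - a) w))
          = ∑ i ∈ Finset.range (k + 1), g i z * (((k - i : ℕ):ℂ)+1) * g (k - i + 1) w := by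
        rw [Finset.sum_range_succ (fun a => ((k:ℂ) + 1 - a) * (g a z * g (k + 1 - a) w)) (k+1)]
        have hlast : ((k:ℂ) + 1 - ((k+1:ℕ):ℂ)) * (g (k+1) z * g (k + 1 - (k+1)) w) = 0 := by
          push_cast; ring_nf
        rw [hlast, add_zero]
        refine Finset.sum_congr rfl fun i hi => ?_
        have hik : i ≤ k := Nat.lt_succ_iff.mp (Finset.mem_range.mp hi)
        have h1 : k - i + 1 = k + 1 - i := by omega
        have h2 : ((k - i : ℕ):ℂ) = (k:ℂ) - i := by push_cast [hik]; ring
        rw [h1, h2]; ring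
      rw [← s1, ← s2, ← Finset.sum_add_distrib, Finset.mul_sum]
      refine Finset.sum_congr rfl fun a ha => ?_
      ring
    have hk1 : ((k:ℂ) + 1) ≠ 0 := by
      exact_mod_cast Nat.cast_add_one_ne_zero (R := ℂ) k
    rw [ih, g_rec k (z + w)] at key
    have goal := mul_left_cancel₀ hk1 key
    convert goal using 2

/-- with `B = λ·I + N` (`N` the superdiagonal nilpotent matrix), `λ ≠ 0`,
`exp L = λ`, the function `φ(z) = Σ_{i<n} g_i(z)·exp((z-i)·L)·N^i` is a C-flow of `B`. -/
theorem jordan_block_C_flow (n : ℕ) (hn : 1 ≤ n) (lam L : ℂ) (hlam : lam ≠ 0)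
    (hL : Complex.exp L = lam)
    (N : Matrix (Fin n) (Fin n) ℂ)
    (hN : N = Matrix.of fun i j : Fin n => if (i : ℕ) + 1 = (j : ℕ) then 1 else 0)
    (B : Matrix (Fin n) (Fin n) ℂ)
    (hB : B = lam • (1 : Matrix (Fin n) (Fin n) ℂ) + N)
    (φ : ℂ → Matrix (Fin n) (Fin n) ℂ)
    (hφ : ∀ z : ℂ,
      φ z = ∑ i ∈ Finset.range n, (g i z * Complex.exp ((z - i) * L)) • N ^ i) :
    (∀ z w : ℂ, φ (z + w) = φ z * φ w) ∧ φ 0 = 1 ∧ φ 1 = B := by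
  have hNapp : ∀ a b : Fin n, N a b = if (a : ℕ) + 1 = (b : ℕ) then 1 else 0 := by
    intro a b; rw [hN]; rfl
  -- powers of N
  have hNpow : ∀ k : ℕ, ∀ i j : Fin n,
      (N ^ k) i j = if (i : ℕ) + k = (j : ℕ) then 1 else 0 := by
    intro k
    induction k with
    | zero => intro i j; simp [Matrix.one_apply, Fin.ext_iff, eq_comm]
    | succ k ih =>
      intro i j
      rw [pow_succ, Matrix.mul_apply]
      simp only [ih, hNapp]
      by_cases h : (i : ℕ) + k < n
      · rw [Finset.sum_eq_single_of_mem (⟨(i : ℕ) + k, h⟩ : Fin n) (Finset.mem_univ _)]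
        · simp [add_assoc]
        · intro b _ hb
          have hb' : ¬ ((i : ℕ) + k = (b : ℕ)) := by
            intro hc
            exact hb (Fin.ext hc.symm)
          simp [hb']
      · rw [Finset.sum_eq_zero, if_neg (by have := j.isLt; omega)]
        intro b _
        have hb' : ¬ ((i : ℕ) + k = (b : ℕ)) := by have := b.isLt; omega
        simp [hb']
  have hNzero : ∀ m : ℕ, n ≤ m → N ^ m = 0 := by
    intro m hm
    ext i j
    rw [hNpow]
    have : ¬ ((i : ℕ) + m = (j : ℕ)) := by have := j.isLt; omega
    simp [this]
  set c : ℂ → ℕ → ℂ := fun z i => g i z * Complex.exp ((z - i) * L) with hc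
  have hcv : ∀ (k : ℕ) (z w : ℂ),
      c (z + w) k = ∑ i ∈ Finset.range (k + 1), c z i * c w (k - i) := by
    intro k z w
    have key : ∀ i ∈ Finset.range (k + 1),
        c z i * c w (k - i) = (g i z * g (k - i) w) * Complex.exp ((z + w - k) * L) := by
      intro i hi
      have hik : i ≤ k := Nat.lt_succ_iff.mp (Finset.mem_range.mp hi)
      have hcast : ((k - i : ℕ) : ℂ) = (k : ℂ) - i := by push_cast [hik]; ring
      simp only [hc]
      rw [show (z + w - (k:ℂ)) * L = (z - i) * L + (w - ((k - i : ℕ):ℂ)) * L by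
        rw [hcast]; ring, Complex.exp_add]
      ring
    rw [Finset.sum_congr rfl key, ← Finset.sum_mul, g_vand]
  refine ⟨?_, ?_, ?_⟩
  · intro z w
    rw [hφ, hφ, hφ, Finset.sum_mul_sum]
    simp only [Matrix.smul_mul, Matrix.mul_smul, smul_smul, ← pow_add]
    have lhs : ∑ k ∈ Finset.range n, (c (z + w) k) • N ^ k
        = ∑ k ∈ Finset.range n, ∑ i ∈ Finset.range (k + 1),
            (c z i * c w (k - i)) • N ^ (i + (k - i)) := by
      refine Finset.sum_congr rfl fun k _ => ?_
      rw [hcv, Finset.sum_smul]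
      refine Finset.sum_congr rfl fun i hi => ?_
      have hik : i ≤ k := Nat.lt_succ_iff.mp (Finset.mem_range.mp hi)
      rw [Nat.add_sub_cancel' hik]
    rw [lhs]
    rw [Finset.sum_sigma' (Finset.range n) (fun k => Finset.range (k+1))
      (fun k i => (c z i * c w (k - i)) • N ^ (i + (k - i)))]
    rw [← Finset.sum_product' (s := Finset.range n) (t := Finset.range n)
      (f := fun i j => (c w j * c z i) • N ^ (i + j))]
    rw [← Finset.sum_filter_of_ne (p := fun p : ℕ × ℕ => p.1 + p.2 < n)
      (f := fun p : ℕ × ℕ => (c w p.2 * c z p.1) • N ^ (p.1 + p.2))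
      (fun p _ hne => by
        by_contra hlt
        simp only [not_lt] at hlt
        exact hne (by rw [hNzero (p.1 + p.2) hlt, smul_zero]))]
    refine Finset.sum_nbij' (fun p => (p.2, p.1 - p.2)) (fun q => ⟨q.1 + q.2, q.1⟩)
      ?_ ?_ ?_ ?_ ?_
    · rintro ⟨k, i⟩ hp
      simp only [Finset.mem_sigma, Finset.mem_range] at hp
      simp only [Finset.mem_filter, Finset.mem_product, Finset.mem_range]
      omega
    · rintro ⟨a, b⟩ hq
      simp only [Finset.mem_filter, Finset.mem_product, Finset.mem_range] at hq
      simp only [Finset.mem_sigma, Finset.mem_range]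
      omega
    · rintro ⟨k, i⟩ hp
      simp only [Finset.mem_sigma, Finset.mem_range] at hp
      have hik : i ≤ k := by omega
      simp [Nat.add_sub_cancel' hik]
    · rintro ⟨a, b⟩ hq
      simp
    · rintro ⟨k, i⟩ hp
      rw [mul_comm (c z i)]
  · rw [hφ]
    rw [Finset.sum_eq_single_of_mem 0 (Finset.mem_range.mpr hn)]
    · simp [g_zero]
    · intro i _ hi
      have : g i 0 = 0 := by
        rw [g, Finset.prod_eq_zero (Finset.mem_range.mpr (Nat.pos_of_ne_zero hi))]
        · simp
        · simp
      rw [this, zero_mul, zero_smul]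
  · rw [hφ, hB]
    have hg1 : g 1 1 = 1 := by simp [g]
    have hgi : ∀ i, 2 ≤ i → g i 1 = 0 := by
      intro i hi
      rw [g, Finset.prod_eq_zero (Finset.mem_range.mpr (by omega : 1 < i))]
      · simp
      · simp
    rcases eq_or_lt_of_le hn with h1 | h2
    · -- n = 1
      have hN0 : N = 0 := by
        ext i j
        rw [hNapp]
        have : ¬((i:ℕ) + 1 = (j:ℕ)) := by have := j.isLt; omega
        simp [this]
      subst h1
      simp [Finset.sum_range_one, g_zero, hL, hN0]
    · -- 2 ≤ n
      have hsub : Finset.range 2 ⊆ Finset.range n := by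
        intro x hx; simp only [Finset.mem_range] at hx ⊢; omega
      rw [← Finset.sum_subset hsub (by
        intro x _ hx
        simp only [Finset.mem_range] at hx
        rw [hgi x (by omega), zero_mul, zero_smul])]
      rw [Finset.sum_range_succ, Finset.sum_range_one]
      simp [g_zero, hg1, hL]
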